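/- If a simplicial complex K is d-collapsible, then there exists a d-collapsing of K in which first only (d−1)-dimensional faces are collapsed and afterwards only faces of dimension less than d−1 are removed (each removed face being a maximal face at the time of removal). -/

import Mathlib

open Finset

variable {V : Type*} [DecidableEq V]

/-- An (abstract, finite) simplicial complex: a set system closed under taking subsets. -/
def IsComplex (K : Finset (Finset V)) : Prop :=
  ∀ σ ∈ K, ∀ τ ⊆ σ, τ ∈ K

/-- `τ` is the unique maximal face of `K` containing `σ`. -/
def IsTau (K : Finset (Finset V)) (σ τ : Finset V) : Prop :=
  σ ∈ K ∧ τ ∈ K ∧ σ ⊆ τ ∧ ∀ η ∈ K, σ ⊆ η → η ⊆ τ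

/-- `σ` is a `d`-collapsible face of `K`: `dim σ ≤ d - 1` (i.e. `σ.card ≤ d`) and `σ`
is contained in a unique maximal face of `K`. -/
def DCollFace (d : ℕ) (K : Finset (Finset V)) (σ : Finset V) : Prop :=
  σ.card ≤ d ∧ ∃ τ, IsTau K σ τ

/-- The result `K_σ` of the elementary collapse at `σ`: all faces containing `σ` are removed
(they all lie between `σ` and `τ(σ)`). -/
def collapseAt (K : Finset (Finset V)) (σ : Finset V) : Finset (Finset V) :=
  K.filter (fun η => ¬ σ ⊆ η)

/-- One elementary `d`-collapse. -/
def ElemCollapse (d : ℕ) (K K' : Finset (Finset V)) : Prop :=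
  ∃ σ, DCollFace d K σ ∧ K' = collapseAt K σ

/-- `K` `d`-collapses to `L`. -/
def CollapsesTo (d : ℕ) (K L : Finset (Finset V)) : Prop :=
  Relation.ReflTransGen (ElemCollapse d) K L

/-- `K` is `d`-collapsible. -/
def DCollapsible (d : ℕ) (K : Finset (Finset V)) : Prop :=
  CollapsesTo d K ∅

/-- Result of successively collapsing the faces in the list `L`. -/
def collapseList (K : Finset (Finset V)) (L : List (Finset V)) : Finset (Finset V) :=
  L.foldl collapseAt K

/-- `L` is a valid sequence of elementary `d`-collapses starting at `K`. -/
def IsCollapseSeq (d : ℕ) (K : Finset (Finset V)) (L : List (Finset V)) : Prop :=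
  ∀ (i : ℕ) (h : i < L.length), DCollFace d (collapseList K (L.take i)) (L.get ⟨i, h⟩)

/-- A `d`-collapsible complex admits a `d`-collapsing in which first only `(d-1)`-dimensional
faces are collapsed, and afterwards only faces of dimension `< d-1` are removed, each of
them being a maximal face of the current complex (`IsTau _ σ σ`). -/
-- auxiliary lemmas

lemma mem_collapseAt {K : Finset (Finset V)} {σ η : Finset V} :
    η ∈ collapseAt K σ ↔ η ∈ K ∧ ¬ σ ⊆ η := by
  simp [collapseAt]

lemma collapseAt_subset (K : Finset (Finset V)) (σ : Finset V) : collapseAt K σ ⊆ K :=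
  filter_subset _ _

lemma isComplex_collapseAt {K : Finset (Finset V)} (hK : IsComplex K) (σ : Finset V) :
    IsComplex (collapseAt K σ) := by
  intro η hη ζ hζ
  rw [mem_collapseAt] at hη ⊢
  exact ⟨hK η hη.1 ζ hζ, fun h => hη.2 (h.trans hζ)⟩

lemma collapseList_nil (K : Finset (Finset V)) : collapseList K [] = K := rfl

lemma collapseList_cons (K : Finset (Finset V)) (σ : Finset V) (L : List (Finset V)) :
    collapseList K (σ :: L) = collapseList (collapseAt K σ) L := rfl

lemma collapseList_append (K : Finset (Finset V)) (A B : List (Finset V)) :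
    collapseList K (A ++ B) = collapseList (collapseList K A) B :=
  List.foldl_append ..

lemma collapseList_subset (K : Finset (Finset V)) (L : List (Finset V)) :
    collapseList K L ⊆ K := by
  induction L generalizing K with
  | nil => exact Finset.Subset.refl K
  | cons p P ih => exact (ih (collapseAt K p)).trans (collapseAt_subset K p)

lemma collapseAt_insert {σ p : Finset V} (N : Finset (Finset V)) (hp : ¬ p ⊆ σ) :
    collapseAt (insert σ N) p = insert σ (collapseAt N p) := by
  ext η
  simp only [mem_collapseAt, mem_insert]
  constructor
  · rintro ⟨(rfl | h), hn⟩
    · exact Or.inl rfl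
    · exact Or.inr ⟨h, hn⟩
  · rintro (rfl | ⟨h, hn⟩)
    · exact ⟨Or.inl rfl, hp⟩
    · exact ⟨Or.inr h, hn⟩

lemma collapseAt_insert_self {σ : Finset V} {N : Finset (Finset V)}
    (hN : ∀ η ∈ N, ¬ σ ⊆ η) : collapseAt (insert σ N) σ = N := by
  ext η
  simp only [mem_collapseAt, mem_insert]
  constructor
  · rintro ⟨(rfl | h), hn⟩
    · exact absurd (Finset.Subset.refl _) hn
    · exact h
  · intro h
    exact ⟨Or.inr h, hN η h⟩

lemma collapseList_insert {σ : Finset V} (N : Finset (Finset V)) (P : List (Finset V))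
    (hP : ∀ p ∈ P, ¬ p ⊆ σ) :
    collapseList (insert σ N) P = insert σ (collapseList N P) := by
  induction P generalizing N with
  | nil => rfl
  | cons p P ih =>
    rw [collapseList_cons, collapseList_cons,
      collapseAt_insert N (hP p (List.mem_cons_self))]
    exact ih _ (fun q hq => hP q (List.mem_cons_of_mem p hq))

lemma isTau_insert {N : Finset (Finset V)} {σ p τp : Finset V} (hps : ¬ p ⊆ σ)
    (h : IsTau N p τp) : IsTau (insert σ N) p τp := by
  refine ⟨mem_insert_of_mem h.1, mem_insert_of_mem h.2.1, h.2.2.1, ?_⟩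
  intro η hη hpη
  rcases mem_insert.mp hη with rfl | hη
  · exact absurd hpη hps
  · exact h.2.2.2 η hη hpη

/-- The target property. -/
def Good (d : ℕ) (K : Finset (Finset V)) : Prop :=
  ∃ (L : List (Finset V)) (k : ℕ), IsCollapseSeq d K L ∧ collapseList K L = ∅ ∧
    k ≤ L.length ∧
    (∀ (i : ℕ) (h : i < L.length), i < k → (L.get ⟨i, h⟩).card = d) ∧
    (∀ (i : ℕ) (h : i < L.length), k ≤ i → (L.get ⟨i, h⟩).card < d ∧
      IsTau (collapseList K (L.take i)) (L.get ⟨i, h⟩) (L.get ⟨i, h⟩))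

/-- Case A: prepend a collapse at a face of cardinality exactly `d`. -/
lemma good_cons {d : ℕ} {K : Finset (Finset V)} {σ : Finset V}
    (hσ : DCollFace d K σ) (hcard : σ.card = d)
    (hgood : Good d (collapseAt K σ)) : Good d K := by
  obtain ⟨L, k, h1, h2, h3, h4, h5⟩ := hgood
  refine ⟨σ :: L, k + 1, ?_, ?_, ?_, ?_, ?_⟩
  · intro i hi
    cases i with
    | zero => simpa [collapseList] using hσ
    | succ j =>
      have hj : j < L.length := by simpa using hi
      simpa [collapseList_cons] using h1 j hj
  · simpa [collapseList_cons] using h2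
  · simpa using Nat.succ_le_succ h3
  · intro i hi hik
    cases i with
    | zero => simpa using hcard
    | succ j =>
      have hj : j < L.length := by simpa using hi
      simpa using h4 j hj (by omega)
  · intro i hi hik
    cases i with
    | zero => omega
    | succ j =>
      have hj : j < L.length := by simpa using hi
      simpa [collapseList_cons] using h5 j hj (by omega)

/-- Case B: insert the removal of a maximal face of cardinality `< d` at position `k`. -/
lemma good_maximal {d : ℕ} {K : Finset (Finset V)} {σ : Finset V}
    (hcard : σ.card < d) (hτ : IsTau K σ σ)
    (hgood : Good d (collapseAt K σ)) : Good d K := by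
  obtain ⟨L, k, h1, h2, h3, h4, h5⟩ := hgood
  set K₁ := collapseAt K σ with hK₁
  have hK₁mem : ∀ η ∈ K₁, ¬ σ ⊆ η := fun η hη => (mem_collapseAt.mp hη).2
  have hKeq : K = insert σ K₁ := by
    ext η
    simp only [mem_insert, hK₁, mem_collapseAt]
    constructor
    · intro hη
      by_cases hs : σ ⊆ η
      · exact Or.inl (Finset.Subset.antisymm (hτ.2.2.2 η hη hs) hs)
      · exact Or.inr ⟨hη, hs⟩
    · rintro (rfl | ⟨hη, _⟩)
      · exact hτ.1
      · exact hη
  -- elements of prefixes of length ≤ k do not contain σ wrongly: they have card d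
  have hA : ∀ i ≤ k, ∀ p ∈ L.take i, ¬ p ⊆ σ := by
    intro i hik p hp
    obtain ⟨j, hj, rfl⟩ := List.getElem_of_mem hp
    have hj' : j < i ∧ j < L.length := by simpa using (List.length_take ▸ hj : j < min i L.length) |> fun h => ⟨lt_of_lt_of_le (lt_min_iff.mp h).1 le_rfl, (lt_min_iff.mp h).2⟩
    rw [List.getElem_take]
    have hc : L[j].card = d := by simpa using h4 j hj'.2 (lt_of_lt_of_le hj'.1 hik)
    intro hsub
    have := Finset.card_le_card hsub
    omega
  set A := L.take k with hAdef
  set B := L.drop k with hBdef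
  have hlenA : A.length = k := by simp [hAdef, h3]
  have hAB : A ++ B = L := List.take_append_drop k L
  -- prefix complexes for i ≤ k
  have fact2 : ∀ i ≤ k, (A ++ σ :: B).take i = L.take i := by
    intro i hik
    rw [List.take_append_of_le_length (by omega)]
    rw [hAdef, List.take_take, min_eq_left hik]
  have fact1 : ∀ i ≤ k, collapseList K (L.take i) = insert σ (collapseList K₁ (L.take i)) := by
    intro i hik
    rw [hKeq]
    exact collapseList_insert _ _ (hA i hik)
  set Nk := collapseList K₁ A with hNk
  have hNkmem : ∀ η ∈ Nk, ¬ σ ⊆ η := fun η hη => hK₁mem η (collapseList_subset K₁ A hη)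
  have fact3 : collapseList K (A ++ [σ]) = Nk := by
    rw [collapseList_append, hAdef, fact1 k le_rfl, ← hAdef, ← hNk]
    show collapseAt (insert σ Nk) σ = Nk
    exact collapseAt_insert_self hNkmem
  -- complexes for i = k + 1 + j
  have fact4 : ∀ j, (A ++ σ :: B).take (k + 1 + j) = (A ++ [σ]) ++ B.take j := by
    intro j
    rw [List.take_append, List.take_of_length_le (by omega),
      List.append_assoc, List.singleton_append]
    congr 2
    · show (σ :: B).take (k + 1 + j - A.length) = σ :: B.take j
      rw [hlenA]
      have : k + 1 + j - k = j + 1 := by omega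
      rw [this, List.take_succ_cons]
  have fact5 : ∀ j, collapseList K ((A ++ σ :: B).take (k + 1 + j))
      = collapseList K₁ (L.take (k + j)) := by
    intro j
    rw [fact4, collapseList_append, fact3]
    rw [show k + j = k + j from rfl, List.take_add, ← hAdef, ← hBdef, collapseList_append, ← hNk]
  have hlen : (A ++ σ :: B).length = L.length + 1 := by
    simp [hlenA, hBdef]; omega
  -- getElem facts
  have hget_lt : ∀ i (hik : i < k) (h : i < (A ++ σ :: B).length),
      (A ++ σ :: B)[i] = L[i]'(by omega) := by
    intro i hik h
    rw [List.getElem_append_left (by omega)]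
    exact List.getElem_take ..
  have hget_eq : ∀ (h : k < (A ++ σ :: B).length), (A ++ σ :: B)[k] = σ := by
    intro h
    rw [List.getElem_append_right (by omega)]
    simp [hlenA]
  have hget_gt : ∀ j (h : k + 1 + j < (A ++ σ :: B).length),
      (A ++ σ :: B)[k + 1 + j] = L[k + j]'(by omega) := by
    intro j h
    rw [List.getElem_append_right (by omega)]
    have heq : k + 1 + j - A.length = j + 1 := by omega
    simp only [heq, List.getElem_cons_succ]
    exact List.getElem_drop ..
  refine ⟨A ++ σ :: B, k, ?_, ?_, by omega, ?_, ?_⟩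
  · -- IsCollapseSeq
    intro i hi
    simp only [List.get_eq_getElem]
    rcases lt_trichotomy i k with hik | rfl | hik
    · rw [hget_lt i hik hi, fact2 i (le_of_lt hik), fact1 i (le_of_lt hik)]
      have hiL : i < L.length := by omega
      have := h1 i hiL
      simp only [List.get_eq_getElem] at this
      obtain ⟨hc, τp, hτp⟩ := this
      have hps : ¬ L[i] ⊆ σ := by
        have : L[i].card = d := by simpa using h4 i hiL hik
        intro hsub; have := Finset.card_le_card hsub; omega
      exact ⟨hc, τp, isTau_insert hps hτp⟩
    · rw [hget_eq hi, fact2 i le_rfl, fact1 i le_rfl]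
      refine ⟨le_of_lt hcard, σ, mem_insert_self σ _, mem_insert_self σ _, Finset.Subset.refl σ, ?_⟩
      intro η hη hsub
      rcases mem_insert.mp hη with rfl | hη
      · exact Finset.Subset.refl _
      · exact absurd hsub (hNkmem η (by rwa [← hAdef] at hη))
    · obtain ⟨j, rfl⟩ : ∃ j, i = k + 1 + j := ⟨i - k - 1, by omega⟩
      rw [hget_gt j hi, fact5 j]
      have hjL : k + j < L.length := by omega
      have := h1 (k + j) hjL
      simpa using this
  · -- collapses to ∅
    have : A ++ σ :: B = (A ++ [σ]) ++ B := by simp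
    rw [this, collapseList_append, fact3, ← h2, ← hAB, collapseList_append]
  · -- first k have card d
    intro i hi hik
    simp only [List.get_eq_getElem]
    rw [hget_lt i hik hi]
    simpa using h4 i (by omega) hik
  · -- tail: card < d and maximal
    intro i hi hik
    simp only [List.get_eq_getElem]
    rcases eq_or_lt_of_le hik with rfl | hik'
    · rw [hget_eq hi, fact2 k le_rfl, fact1 k le_rfl]
      refine ⟨hcard, mem_insert_self σ _, mem_insert_self σ _, Finset.Subset.refl σ, ?_⟩
      intro η hη hsub
      rcases mem_insert.mp hη with rfl | hη
      · exact Finset.Subset.refl _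
      · exact absurd hsub (hNkmem η (by rwa [← hAdef] at hη))
    · obtain ⟨j, rfl⟩ : ∃ j, i = k + 1 + j := ⟨i - k - 1, by omega⟩
      rw [hget_gt j hi, fact5 j]
      have hjL : k + j < L.length := by omega
      have := h5 (k + j) hjL (by omega)
      simpa using this

/-- The main step lemma: if the complex obtained by collapsing at `σ` is good, so is `K`. -/
lemma good_step (d : ℕ) : ∀ n : ℕ, ∀ K : Finset (Finset V), ∀ σ τ : Finset V,
    (τ \ σ).card ≤ n → IsComplex K → IsTau K σ τ → σ.card ≤ d →
    Good d (collapseAt K σ) → Good d K := by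
  intro n
  induction n with
  | zero =>
    intro K σ τ hn hK hτ hcard hgood
    have hts : τ = σ := by
      have : τ \ σ = ∅ := Finset.card_eq_zero.mp (Nat.le_zero.mp hn)
      have hsub : τ ⊆ σ := by
        intro x hx
        by_contra hxs
        exact absurd (Finset.mem_sdiff.mpr ⟨hx, hxs⟩) (by simp [this])
      exact Finset.Subset.antisymm hsub hτ.2.2.1
    subst hts
    rcases eq_or_lt_of_le hcard with hd | hd
    · exact good_cons ⟨hcard, τ, hτ⟩ hd hgood
    · exact good_maximal hd hτ hgood
  | succ n ih =>
    intro K σ τ hn hK hτ hcard hgood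
    rcases eq_or_lt_of_le hcard with hd | hd
    · exact good_cons ⟨hcard, τ, hτ⟩ hd hgood
    rcases Finset.eq_empty_or_nonempty (τ \ σ) with he | ⟨v, hv⟩
    · have hts : τ = σ := by
        have hsub : τ ⊆ σ := by
          intro x hx
          by_contra hxs
          exact absurd (Finset.mem_sdiff.mpr ⟨hx, hxs⟩) (by simp [he])
        exact Finset.Subset.antisymm hsub hτ.2.2.1
      subst hts
      exact good_maximal hd hτ hgood
    · obtain ⟨hvτ, hvσ⟩ := Finset.mem_sdiff.mp hv
      set σₕ := insert v σ with hσₕ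
      have hcardₕ : σₕ.card = σ.card + 1 := Finset.card_insert_of_notMem hvσ
      have hσₕτ : σₕ ⊆ τ := Finset.insert_subset hvτ hτ.2.2.1
      have hσₕK : σₕ ∈ K := hK τ hτ.2.1 σₕ hσₕτ
      have hτₕ : IsTau K σₕ τ :=
        ⟨hσₕK, hτ.2.1, hσₕτ, fun η hη hs => hτ.2.2.2 η hη ((Finset.subset_insert v σ).trans hs)⟩
      set K' := collapseAt K σₕ with hK'def
      have hτ' : IsTau K' σ (τ.erase v) := by
        refine ⟨?_, ?_, ?_, ?_⟩
        · exact mem_collapseAt.mpr ⟨hτ.1, fun h => hvσ (h (Finset.mem_insert_self v σ))⟩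
        · refine mem_collapseAt.mpr ⟨hK τ hτ.2.1 _ (Finset.erase_subset v τ), ?_⟩
          intro h
          exact absurd (h (Finset.mem_insert_self v σ)) (Finset.notMem_erase v τ)
        · exact Finset.subset_erase.mpr ⟨hτ.2.2.1, hvσ⟩
        · intro η hη hs
          obtain ⟨hηK, hηₕ⟩ := mem_collapseAt.mp hη
          refine Finset.subset_erase.mpr ⟨hτ.2.2.2 η hηK hs, ?_⟩
          intro hvη
          exact hηₕ (Finset.insert_subset hvη hs)
      have hsd1 : τ \ σₕ = (τ \ σ).erase v := by
        ext x
        simp only [Finset.mem_sdiff, Finset.mem_erase, hσₕ, Finset.mem_insert]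
        tauto
      have hsd2 : (τ.erase v) \ σ = (τ \ σ).erase v := by
        ext x
        simp only [Finset.mem_sdiff, Finset.mem_erase]
        tauto
      have hcard_erase : ((τ \ σ).erase v).card ≤ n := by
        have := Finset.card_erase_of_mem hv
        omega
      have heq : collapseAt K' σ = collapseAt K σ := by
        ext η
        simp only [mem_collapseAt, hK'def]
        constructor
        · rintro ⟨⟨h1, _⟩, h3⟩; exact ⟨h1, h3⟩
        · rintro ⟨h1, h2⟩
          exact ⟨⟨h1, fun h => h2 ((Finset.subset_insert v σ).trans h)⟩, h2⟩
      have hK'c : IsComplex K' := isComplex_collapseAt hK σₕ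
      have g1 : Good d K' := by
        apply ih K' σ (τ.erase v) (by rw [hsd2]; exact hcard_erase) hK'c hτ' (le_of_lt hd)
        rwa [heq]
      exact ih K σₕ τ (by rw [hsd1]; exact hcard_erase) hK hτₕ (by omega) g1

theorem stmt6 (d : ℕ) (K : Finset (Finset V)) (hK : IsComplex K)
    (hcoll : DCollapsible d K) :
    ∃ (L : List (Finset V)) (k : ℕ), IsCollapseSeq d K L ∧ collapseList K L = ∅ ∧
      k ≤ L.length ∧
      (∀ (i : ℕ) (h : i < L.length), i < k → (L.get ⟨i, h⟩).card = d) ∧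
      (∀ (i : ℕ) (h : i < L.length), k ≤ i → (L.get ⟨i, h⟩).card < d ∧
        IsTau (collapseList K (L.take i)) (L.get ⟨i, h⟩) (L.get ⟨i, h⟩)) := by
  have main : ∀ K : Finset (Finset V), CollapsesTo d K ∅ → IsComplex K → Good d K := by
    intro K h
    induction h using Relation.ReflTransGen.head_induction_on with
    | refl =>
      intro _
      exact ⟨[], 0, fun i h => absurd h (by simp), rfl, le_rfl,
        fun i h => absurd h (by simp), fun i h => absurd h (by simp)⟩
    | head hstep htail ih =>
      intro hKc
      obtain ⟨σ, hσ, rfl⟩ := hstep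
      obtain ⟨hcard, τ, hτ⟩ := hσ
      exact good_step d (τ \ σ).card _ σ τ le_rfl hKc hτ hcard (ih (isComplex_collapseAt hKc σ))
  exact main K hcoll hK
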